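/- Let A, B, C be real matrices of sizes n×n, n×m, p×n, and let P, P̃ : [0,T] → Sym(n,ℝ) be differentiable solutions of the differential Riccati equation Ṗ_t = AᵀP_t + P_tA + P_tBBᵀP_t + CᵀC on [0,T]. If P₀ − P̃₀ is negative semidefinite, then P_t − P̃_t is negative semidefinite for all t ∈ [0,T]. -/

import Mathlib

open Matrix
open Filter Topology Set

section RiccatiAux

variable {n : ℕ}

private lemma riccati_quad_sum (N : Matrix (Fin n) (Fin n) ℝ) (x : Fin n → ℝ) :
    x ⬝ᵥ (N *ᵥ x) = ∑ i, ∑ j, x i * (N i j * x j) := by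
  simp [dotProduct, mulVec, Finset.mul_sum]

private lemma riccati_quad_smul (N : Matrix (Fin n) (Fin n) ℝ) (x : Fin n → ℝ) (r : ℝ) :
    (r • x) ⬝ᵥ (N *ᵥ (r • x)) = r ^ 2 * (x ⬝ᵥ (N *ᵥ x)) := by
  rw [Matrix.mulVec_smul, smul_dotProduct, dotProduct_smul, smul_eq_mul, smul_eq_mul]
  ring

private lemma riccati_dot_self_nonneg (x : Fin n → ℝ) : 0 ≤ x ⬝ᵥ x :=
  Finset.sum_nonneg fun i _ => mul_self_nonneg (x i)

private lemma riccati_unit_abs_le {u : Fin n → ℝ} (hu : u ⬝ᵥ u = 1) (i : Fin n) : |u i| ≤ 1 := by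
  have h : u i * u i ≤ 1 := by
    rw [← hu]
    exact Finset.single_le_sum (fun j _ => mul_self_nonneg (u j)) (Finset.mem_univ i)
  exact abs_le_one_iff_mul_self_le_one.mpr h

private lemma riccati_nonneg_of_unit (N : Matrix (Fin n) (Fin n) ℝ)
    (h : ∀ u : Fin n → ℝ, u ⬝ᵥ u = 1 → 0 ≤ u ⬝ᵥ (N *ᵥ u)) (x : Fin n → ℝ) :
    0 ≤ x ⬝ᵥ (N *ᵥ x) := by
  rcases eq_or_ne x 0 with rfl | hx
  · simp
  · have hxx : 0 < x ⬝ᵥ x :=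
      lt_of_le_of_ne (riccati_dot_self_nonneg x)
        (fun h' => hx (dotProduct_self_eq_zero.mp h'.symm))
    set r : ℝ := Real.sqrt (x ⬝ᵥ x) with hr
    have hrpos : 0 < r := Real.sqrt_pos.mpr hxx
    have hr2 : r ^ 2 = x ⬝ᵥ x := Real.sq_sqrt hxx.le
    have hu : (r⁻¹ • x) ⬝ᵥ ((1 : Matrix (Fin n) (Fin n) ℝ) *ᵥ (r⁻¹ • x)) = 1 := by
      rw [riccati_quad_smul, Matrix.one_mulVec]
      field_simp
      rw [hr2]
    rw [Matrix.one_mulVec] at hu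
    have h2 := h (r⁻¹ • x) hu
    rw [riccati_quad_smul] at h2
    nlinarith [pow_pos (inv_pos.mpr hrpos) 2]

end RiccatiAux

/-- Monotonicity of solutions of the differential Riccati equation
`Ṗ = AᵀP + PA + PBBᵀP + CᵀC` with respect to initial data in the Loewner order:
if `P₀ − P̃₀ ⪯ 0` then `P_t − P̃_t ⪯ 0` on `[0,T]`. -/
theorem riccati_monotone {n m p : ℕ} (T : ℝ) (hT : 0 < T)
    (A : Matrix (Fin n) (Fin n) ℝ) (B : Matrix (Fin n) (Fin m) ℝ)
    (C : Matrix (Fin p) (Fin n) ℝ)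
    (P Ptil : ℝ → Matrix (Fin n) (Fin n) ℝ)
    (hPsym : ∀ t, (P t)ᵀ = P t) (hPtilsym : ∀ t, (Ptil t)ᵀ = Ptil t)
    (hP : ∀ t ∈ Set.Icc (0:ℝ) T, ∀ i j, HasDerivAt (fun s => P s i j)
      ((Aᵀ * P t + P t * A + P t * B * Bᵀ * P t + Cᵀ * C) i j) t)
    (hPtil : ∀ t ∈ Set.Icc (0:ℝ) T, ∀ i j, HasDerivAt (fun s => Ptil s i j)
      ((Aᵀ * Ptil t + Ptil t * A + Ptil t * B * Bᵀ * Ptil t + Cᵀ * C) i j) t)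
    (h0 : (Ptil 0 - P 0).PosSemidef) :
    ∀ t ∈ Set.Icc (0:ℝ) T, (Ptil t - P t).PosSemidef := by
  set S : Matrix (Fin n) (Fin n) ℝ := B * Bᵀ with hSdef
  set D : ℝ → Matrix (Fin n) (Fin n) ℝ := fun t => Ptil t - P t with hDdef
  set Dd : ℝ → Matrix (Fin n) (Fin n) ℝ :=
    fun t => Aᵀ * D t + D t * A + P t * S * D t + D t * S * Ptil t with hDddef
  -- derivative of the difference
  have hD : ∀ t ∈ Set.Icc (0:ℝ) T, ∀ i j,
      HasDerivAt (fun s => D s i j) (Dd t i j) t := by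
    intro t ht i j
    have h1 := (hPtil t ht i j).sub (hP t ht i j)
    have key : (Aᵀ * Ptil t + Ptil t * A + Ptil t * B * Bᵀ * Ptil t + Cᵀ * C)
        - (Aᵀ * P t + P t * A + P t * B * Bᵀ * P t + Cᵀ * C) = Dd t := by
      simp only [hDddef, hDdef, hSdef]
      simp only [Matrix.mul_assoc, Matrix.mul_sub, Matrix.sub_mul, Matrix.mul_add,
        Matrix.add_mul]
      noncomm_ring
    have h2 : (fun s => D s i j) = fun s => Ptil s i j - P s i j := by
      funext s; simp [hDdef, Matrix.sub_apply]
    rw [h2, ← key, Matrix.sub_apply]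
    exact h1
  -- symmetry of D
  have hDsym : ∀ t, (D t)ᵀ = D t := by
    intro t
    simp [hDdef, Matrix.transpose_sub, hPsym, hPtilsym]
  -- continuity facts
  have hDcont : ∀ t ∈ Set.Icc (0:ℝ) T, ∀ i j, ContinuousAt (fun s => D s i j) t :=
    fun t ht i j => (hD t ht i j).continuousAt
  have hPcont : ∀ i j, ContinuousOn (fun t => P t i j) (Set.Icc 0 T) :=
    fun i j t ht => (hP t ht i j).continuousAt.continuousWithinAt
  have hPtilcont : ∀ i j, ContinuousOn (fun t => Ptil t i j) (Set.Icc 0 T) :=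
    fun i j t ht => (hPtil t ht i j).continuousAt.continuousWithinAt
  -- the matrix appearing in the key bound
  set G : ℝ → Matrix (Fin n) (Fin n) ℝ := fun t => Aᵀ + A + P t * S + S * Ptil t with hGdef
  set φ : ℝ → ℝ := fun t => ∑ i, ∑ j, |G t i j| with hφdef
  have hGcont : ∀ i j, ContinuousOn (fun t => G t i j) (Set.Icc 0 T) := by
    intro i j
    simp only [hGdef, Matrix.add_apply, Matrix.mul_apply]
    refine ((continuousOn_const.add ?_).add ?_)
    · exact continuousOn_finset_sum _ fun k _ => (hPcont i k).mul continuousOn_const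
    · exact continuousOn_finset_sum _ fun k _ => continuousOn_const.mul (hPtilcont k j)
  have hφcont : ContinuousOn φ (Set.Icc 0 T) := by
    apply continuousOn_finset_sum
    intro i _
    exact continuousOn_finset_sum _ fun j _ => (hGcont i j).abs
  obtain ⟨t0, ht0, hKmax⟩ := isCompact_Icc.exists_isMaxOn
    (Set.nonempty_Icc.mpr hT.le) hφcont
  set K : ℝ := φ t0 + 1 with hKdef
  -- the key strict positivity claim
  have key : ∀ ε : ℝ, 0 < ε → ∀ t ∈ Set.Icc (0:ℝ) T, ∀ u : Fin n → ℝ, u ⬝ᵥ u = 1 →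
      0 < u ⬝ᵥ (D t *ᵥ u) + ε * Real.exp (K * t) := by
    intro ε hε
    by_contra hcon
    push_neg at hcon
    obtain ⟨t1, ht1, u1, hu1, hQ1⟩ := hcon
    set Sbad : Set ℝ := {t | t ∈ Set.Icc (0:ℝ) T ∧
      ∃ u : Fin n → ℝ, u ⬝ᵥ u = 1 ∧ u ⬝ᵥ (D t *ᵥ u) + ε * Real.exp (K * t) ≤ 0} with hSbad
    have hne : Sbad.Nonempty := ⟨t1, ht1, u1, hu1, hQ1⟩
    have hbdd : BddBelow Sbad := ⟨0, fun s hs => hs.1.1⟩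
    set c : ℝ := sInf Sbad with hcdef
    have hcIcc : c ∈ Set.Icc (0:ℝ) T :=
      ⟨le_csInf hne fun s hs => hs.1.1, (csInf_le hbdd hne.some_mem).trans hne.some_mem.1.2⟩
    -- a witness at c via sequences and compactness of the unit sphere
    obtain ⟨tseq, -, htlim, htmem⟩ := exists_seq_tendsto_sInf hne hbdd
    choose useq huseq hQseq using fun k => (htmem k).2
    have hsphcpt : IsCompact {u : Fin n → ℝ | u ⬝ᵥ u = 1} := by
      rw [Metric.isCompact_iff_isClosed_bounded]
      constructor
      · have hdot : Continuous (fun u : Fin n → ℝ => u ⬝ᵥ u) := by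
          simp only [dotProduct]
          exact continuous_finset_sum _ fun i _ => (continuous_apply i).mul (continuous_apply i)
        exact isClosed_eq hdot continuous_const
      · apply (Metric.isBounded_closedBall (x := (0 : Fin n → ℝ)) (r := 1)).subset
        intro u hu
        rw [Metric.mem_closedBall, dist_zero_right, pi_norm_le_iff_of_nonneg zero_le_one]
        intro i
        rw [Real.norm_eq_abs]
        exact riccati_unit_abs_le hu i
    obtain ⟨x, hxmem, ψ, hψ, hxconv⟩ := hsphcpt.tendsto_subseq (fun k => huseq k)
    have hxunit : x ⬝ᵥ x = 1 := hxmem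
    have htconv : Tendsto (fun k => tseq (ψ k)) atTop (𝓝 c) := htlim.comp hψ.tendsto_atTop
    have hDlim : ∀ i j, Tendsto (fun k => D (tseq (ψ k)) i j) atTop (𝓝 (D c i j)) :=
      fun i j => ((hDcont c hcIcc i j).tendsto).comp htconv
    have hxlim : ∀ i : Fin n, Tendsto (fun k => useq (ψ k) i) atTop (𝓝 (x i)) :=
      fun i => (((continuous_apply i).continuousAt).tendsto).comp hxconv
    have hexpcont : Continuous (fun s : ℝ => ε * Real.exp (K * s)) :=
      continuous_const.mul (Real.continuous_exp.comp (continuous_const.mul continuous_id))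
    have hQlim : Tendsto (fun k => useq (ψ k) ⬝ᵥ (D (tseq (ψ k)) *ᵥ useq (ψ k))
        + ε * Real.exp (K * tseq (ψ k))) atTop
        (𝓝 (x ⬝ᵥ (D c *ᵥ x) + ε * Real.exp (K * c))) := by
      have h1 : Tendsto (fun k => useq (ψ k) ⬝ᵥ (D (tseq (ψ k)) *ᵥ useq (ψ k))) atTop
          (𝓝 (x ⬝ᵥ (D c *ᵥ x))) := by
        simp only [riccati_quad_sum]
        exact tendsto_finset_sum _ fun i _ => tendsto_finset_sum _ fun j _ =>
          (hxlim i).mul ((hDlim i j).mul (hxlim j))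
      exact h1.add ((hexpcont.continuousAt).tendsto.comp htconv)
    have hQc : x ⬝ᵥ (D c *ᵥ x) + ε * Real.exp (K * c) ≤ 0 :=
      le_of_tendsto hQlim (Filter.Eventually.of_forall fun k => hQseq (ψ k))
    have hcpos : 0 < c := by
      rcases lt_or_eq_of_le hcIcc.1 with h | h
      · exact h
      · exfalso
        rw [← h] at hQc
        have h1 : 0 ≤ x ⬝ᵥ (D 0 *ᵥ x) := by
          have := h0.dotProduct_mulVec_nonneg x
          simpa [hDdef] using this
        have h2 : 0 < ε * Real.exp (K * 0) := by positivity
        linarith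
    have hbefore : ∀ s, 0 ≤ s → s < c → ∀ u : Fin n → ℝ, u ⬝ᵥ u = 1 →
        0 < u ⬝ᵥ (D s *ᵥ u) + ε * Real.exp (K * s) := by
      intro s hs0 hsc u hu
      by_contra hle
      push_neg at hle
      have hsmem : s ∈ Sbad := ⟨⟨hs0, hsc.le.trans hcIcc.2⟩, u, hu, hle⟩
      exact absurd (csInf_le hbdd hsmem) (not_le.mpr hsc)
    set cε : ℝ := ε * Real.exp (K * c) with hcε
    have hcεpos : 0 < cε := by positivity
    set E : Matrix (Fin n) (Fin n) ℝ := D c + cε • (1 : Matrix (Fin n) (Fin n) ℝ) with hEdef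
    have hEquad : ∀ y : Fin n → ℝ, y ⬝ᵥ (E *ᵥ y) = y ⬝ᵥ (D c *ᵥ y) + cε * (y ⬝ᵥ y) := by
      intro y
      simp [hEdef, Matrix.add_mulVec, Matrix.smul_mulVec, Matrix.one_mulVec,
        dotProduct_add, dotProduct_smul, smul_eq_mul]
    have hEnn : ∀ y : Fin n → ℝ, 0 ≤ y ⬝ᵥ (E *ᵥ y) := by
      apply riccati_nonneg_of_unit
      intro u hu
      rw [hEquad, hu, mul_one]
      have hcont : ContinuousAt (fun s => u ⬝ᵥ (D s *ᵥ u) + ε * Real.exp (K * s)) c := by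
        apply ContinuousAt.add
        · simp only [riccati_quad_sum]
          exact tendsto_finset_sum _ fun i _ => tendsto_finset_sum _ fun j _ =>
            (continuousAt_const.mul ((hDcont c hcIcc i j).mul continuousAt_const))
        · exact hexpcont.continuousAt
      have hleft : Tendsto (fun s => u ⬝ᵥ (D s *ᵥ u) + ε * Real.exp (K * s)) (𝓝[<] c)
          (𝓝 (u ⬝ᵥ (D c *ᵥ u) + ε * Real.exp (K * c))) :=
        (hcont.tendsto).mono_left nhdsWithin_le_nhds
      have hge : 0 ≤ u ⬝ᵥ (D c *ᵥ u) + ε * Real.exp (K * c) := by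
        refine ge_of_tendsto hleft ?_
        filter_upwards [Ioo_mem_nhdsLT hcpos] with s hs
        exact (hbefore s hs.1.le hs.2 u hu).le
      rw [hcε]
      exact hge
    have hEherm : E.IsHermitian := by
      rw [Matrix.IsHermitian, Matrix.conjTranspose_eq_transpose_of_trivial]
      simp [hEdef, Matrix.transpose_add, Matrix.transpose_smul, hDsym]
    have hEpsd : E.PosSemidef := .of_dotProduct_mulVec_nonneg hEherm fun y => by simpa using hEnn y
    have hEx0 : x ⬝ᵥ (E *ᵥ x) = 0 := by
      refine le_antisymm ?_ (hEnn x)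
      rw [hEquad, hxunit, mul_one, hcε]
      exact hQc
    have hker : E *ᵥ x = 0 := by
      refine (hEpsd.dotProduct_mulVec_zero_iff x).mp ?_
      simpa using hEx0
    have hDx : D c *ᵥ x = (-cε) • x := by
      have h1 : D c *ᵥ x + cε • x = 0 := by
        simpa [hEdef, Matrix.add_mulVec, Matrix.smul_mulVec, Matrix.one_mulVec] using hker
      have h2 : D c *ᵥ x = -(cε • x) := eq_neg_of_add_eq_zero_left h1
      rw [h2, neg_smul]
    have hxvD : x ᵥ* D c = (-cε) • x := by
      calc x ᵥ* D c = x ᵥ* (D c)ᵀ := by rw [hDsym]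
        _ = D c *ᵥ x := Matrix.vecMul_transpose _ _
        _ = (-cε) • x := hDx
    have hterm1 : x ⬝ᵥ ((Aᵀ * D c) *ᵥ x) = -cε * (x ⬝ᵥ (Aᵀ *ᵥ x)) := by
      rw [← Matrix.mulVec_mulVec, hDx, Matrix.mulVec_smul, dotProduct_smul, smul_eq_mul]
    have hterm2 : x ⬝ᵥ ((D c * A) *ᵥ x) = -cε * (x ⬝ᵥ (A *ᵥ x)) := by
      rw [← Matrix.mulVec_mulVec, dotProduct_mulVec, hxvD, smul_dotProduct, smul_eq_mul,
        dotProduct_mulVec]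
    have hterm3 : x ⬝ᵥ ((P c * S * D c) *ᵥ x) = -cε * (x ⬝ᵥ ((P c * S) *ᵥ x)) := by
      rw [← Matrix.mulVec_mulVec, hDx, Matrix.mulVec_smul, dotProduct_smul, smul_eq_mul]
    have hterm4 : x ⬝ᵥ ((D c * S * Ptil c) *ᵥ x) = -cε * (x ⬝ᵥ ((S * Ptil c) *ᵥ x)) := by
      rw [Matrix.mul_assoc, ← Matrix.mulVec_mulVec, dotProduct_mulVec, hxvD,
        smul_dotProduct, smul_eq_mul, dotProduct_mulVec]
    have hDdquad : x ⬝ᵥ (Dd c *ᵥ x) = -cε * (x ⬝ᵥ (G c *ᵥ x)) := by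
      have hG : x ⬝ᵥ (G c *ᵥ x)
          = x ⬝ᵥ (Aᵀ *ᵥ x) + x ⬝ᵥ (A *ᵥ x) + x ⬝ᵥ ((P c * S) *ᵥ x)
            + x ⬝ᵥ ((S * Ptil c) *ᵥ x) := by
        simp [hGdef, Matrix.add_mulVec, dotProduct_add]
      have hDd : x ⬝ᵥ (Dd c *ᵥ x)
          = x ⬝ᵥ ((Aᵀ * D c) *ᵥ x) + x ⬝ᵥ ((D c * A) *ᵥ x)
            + x ⬝ᵥ ((P c * S * D c) *ᵥ x) + x ⬝ᵥ ((D c * S * Ptil c) *ᵥ x) := by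
        simp [hDddef, Matrix.add_mulVec, dotProduct_add]
      rw [hDd, hterm1, hterm2, hterm3, hterm4, hG]
      ring
    have hGbound : x ⬝ᵥ (G c *ᵥ x) ≤ φ c := by
      rw [riccati_quad_sum]
      simp only [hφdef]
      refine Finset.sum_le_sum fun i _ => Finset.sum_le_sum fun j _ => ?_
      calc x i * (G c i j * x j) ≤ |x i * (G c i j * x j)| := le_abs_self _
        _ = |x i| * |G c i j| * |x j| := by rw [abs_mul, abs_mul]; ring
        _ ≤ 1 * |G c i j| * 1 := by
            have h1 := riccati_unit_abs_le hxunit i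
            have h2 := riccati_unit_abs_le hxunit j
            gcongr
        _ = |G c i j| := by ring
    have hφc : φ c ≤ K - 1 := by
      have hmax := hKmax hcIcc
      simp only [hKdef]
      simpa using hmax
    have hfderiv : HasDerivAt (fun s => x ⬝ᵥ (D s *ᵥ x) + ε * Real.exp (K * s))
        (x ⬝ᵥ (Dd c *ᵥ x) + ε * (Real.exp (K * c) * K)) c := by
      apply HasDerivAt.add
      · have heq : (fun s => x ⬝ᵥ (D s *ᵥ x)) = fun s => ∑ i, ∑ j, x i * (D s i j * x j) := by
          funext s; exact riccati_quad_sum _ _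
        rw [heq, riccati_quad_sum]
        apply HasDerivAt.fun_sum
        intro i _
        apply HasDerivAt.fun_sum
        intro j _
        exact HasDerivAt.const_mul (x i) ((hD c hcIcc i j).mul_const (x j))
      · have h1 : HasDerivAt (fun s : ℝ => K * s) K c := by
          simpa using (hasDerivAt_id c).const_mul K
        exact HasDerivAt.const_mul ε h1.exp
    have hfpos : 0 < x ⬝ᵥ (Dd c *ᵥ x) + ε * (Real.exp (K * c) * K) := by
      rw [hDdquad]
      have h1 : x ⬝ᵥ (G c *ᵥ x) ≤ K - 1 := le_trans hGbound hφc
      have h2 : ε * (Real.exp (K * c) * K) = cε * K := by rw [hcε]; ring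
      rw [h2]
      nlinarith [hcεpos]
    have hf0 : x ⬝ᵥ (D c *ᵥ x) + ε * Real.exp (K * c) = 0 := by
      have := hEquad x
      rw [hxunit, mul_one, hEx0, hcε] at this
      linarith
    have hslope := hasDerivAt_iff_tendsto_slope.mp hfderiv
    have hslope' : Tendsto (slope (fun s => x ⬝ᵥ (D s *ᵥ x) + ε * Real.exp (K * s)) c)
        (𝓝[<] c) (𝓝 (x ⬝ᵥ (Dd c *ᵥ x) + ε * (Real.exp (K * c) * K))) :=
      hslope.mono_left (nhdsWithin_mono c fun s hs => ne_of_lt hs)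
    have hnonpos : x ⬝ᵥ (Dd c *ᵥ x) + ε * (Real.exp (K * c) * K) ≤ 0 := by
      refine le_of_tendsto hslope' ?_
      filter_upwards [Ioo_mem_nhdsLT hcpos] with s hs
      have hfs : 0 < x ⬝ᵥ (D s *ᵥ x) + ε * Real.exp (K * s) := hbefore s hs.1.le hs.2 x hxunit
      rw [slope_def_field, hf0]
      exact div_nonpos_iff.mpr (Or.inl ⟨by linarith, by linarith [hs.2]⟩)
    linarith
  -- conclusion from the key claim
  intro t ht
  have hermD : (D t).IsHermitian := by
    rw [Matrix.IsHermitian, Matrix.conjTranspose_eq_transpose_of_trivial]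
    exact hDsym t
  refine Matrix.PosSemidef.of_dotProduct_mulVec_nonneg hermD ?_
  intro x
  have hstar : star x = x := by simp
  rw [hstar]
  show 0 ≤ x ⬝ᵥ (D t *ᵥ x)
  apply riccati_nonneg_of_unit
  intro u hu
  by_contra hlt
  push_neg at hlt
  set δ : ℝ := -(u ⬝ᵥ (D t *ᵥ u)) with hδdef
  have hδpos : 0 < δ := by simp only [hδdef]; linarith
  have hexp : 0 < Real.exp (K * t) := Real.exp_pos _
  have hkey := key (δ / (2 * Real.exp (K * t))) (by positivity) t ht u hu
  have : δ / (2 * Real.exp (K * t)) * Real.exp (K * t) = δ / 2 := by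
    field_simp
  rw [this] at hkey
  simp only [hδdef] at hkey
  linarith
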